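/- Let K : ℂ → Matrix (Fin n) (Fin n) ℂ, B : ℂ → Matrix (Fin n) (Fin m) ℂ, σ ∈ ℂ with K(σ) invertible, and V, W ∈ Matrix (Fin n) (Fin r) ℂ with K̂ := Wᴴ K(σ) V invertible. If V contains V₁ := K(σ)⁻¹B(σ) in its column span, then V * (K̂⁻¹ * Wᴴ B(σ)) = V₁, i.e., the lifted reduced state V * V̂₁ with V̂₁ := K̂(σ)⁻¹B̂(σ) equals the full-order state V₁. -/

import Mathlib

open Matrix Kronecker

theorem stmt_10 {n m r : ℕ}
    (K : ℂ → Matrix (Fin n) (Fin n) ℂ)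
    (B : ℂ → Matrix (Fin n) (Fin m) ℂ)
    (σ : ℂ) (hK : IsUnit (K σ))
    (V W : Matrix (Fin n) (Fin r) ℂ)
    (hKhat : IsUnit (Wᴴ * K σ * V))
    (hVspan : ∃ X, V * X = (K σ)⁻¹ * B σ) :
    V * ((Wᴴ * K σ * V)⁻¹ * (Wᴴ * B σ)) = (K σ)⁻¹ * B σ := by
  obtain ⟨X, hX⟩ : ∃ X : Matrix (Fin r) (Fin m) ℂ, V * X = (K σ)⁻¹ * B σ := hVspan
  have hB : Wᴴ * B σ = (Wᴴ * K σ * V) * X := by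
    have : K σ * (V * X) = B σ := by
      rw [hX, ← Matrix.mul_assoc, Matrix.mul_nonsing_inv _ ((Matrix.isUnit_iff_isUnit_det _).mp hK), Matrix.one_mul]
    calc Wᴴ * B σ = Wᴴ * (K σ * (V * X)) := by rw [this]
    _ = (Wᴴ * K σ * V) * X := by rw [Matrix.mul_assoc, Matrix.mul_assoc]
  rw [hB, Matrix.nonsing_inv_mul_cancel_left _ _ ((Matrix.isUnit_iff_isUnit_det _).mp hKhat), hX]
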